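/- Let G be a connected undirected graph with Laplacian L, 𝐋 = L ⊗ I_d, and let each f^i be locally Lipschitz and convex. Along any solution of the saddle-point dynamics ẋ ∈ −∂f̃(x) − 𝐋x − 𝐋z, ż = 𝐋x, the function V(x, z) = ½‖x − x*‖² + ½‖z − z*‖² is nonincreasing, where (x*, z*) is any saddle point of F(x,z) = f̃(x) + xᵀ𝐋z + ½xᵀ𝐋x; specifically, every element ξ of the set-valued Lie derivative of V satisfies ξ ≤ F(x*, z) − F(x, z*) ≤ 0. -/

import Mathlib

open Matrix BigOperators

/-- The subdifferential of `g : (ι → ℝ) → ℝ` at `x`, with respect to the dot product. -/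
def subdiff {ι : Type*} [Fintype ι] (g : (ι → ℝ) → ℝ) (x : ι → ℝ) : Set (ι → ℝ) :=
  {v | ∀ y, g x + v ⬝ᵥ (y - x) ≤ g y}

lemma lap_psd {ι : Type*} [Fintype ι] [DecidableEq ι] (W : Matrix ι ι ℝ)
    (hnn : ∀ i j, 0 ≤ W i j) (hs : ∀ i j, W i j = W j i) (v : ι → ℝ) :
    0 ≤ v ⬝ᵥ ((Matrix.diagonal (fun i => ∑ j, W i j) - W) *ᵥ v) := by
  have h1a : v ⬝ᵥ (Matrix.diagonal (fun i => ∑ j, W i j) *ᵥ v)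
      = ∑ i, ∑ j, W i j * v i ^ 2 := by
    simp only [dotProduct, Matrix.mulVec_diagonal]
    refine Finset.sum_congr rfl fun i _ => ?_
    rw [Finset.sum_mul, Finset.mul_sum]
    exact Finset.sum_congr rfl fun j _ => by ring
  have h1b : v ⬝ᵥ (W *ᵥ v) = ∑ i, ∑ j, W i j * v i * v j := by
    simp only [dotProduct, Matrix.mulVec]
    refine Finset.sum_congr rfl fun i _ => ?_
    rw [Finset.mul_sum]
    exact Finset.sum_congr rfl fun j _ => by ring
  have h1 : v ⬝ᵥ ((Matrix.diagonal (fun i => ∑ j, W i j) - W) *ᵥ v)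
      = (∑ i, ∑ j, W i j * v i ^ 2) - ∑ i, ∑ j, W i j * v i * v j := by
    rw [Matrix.sub_mulVec, dotProduct_sub, h1a, h1b]
  have h2 : ∑ i, ∑ j, W i j * v j ^ 2 = ∑ i, ∑ j, W i j * v i ^ 2 := by
    rw [Finset.sum_comm]
    exact Finset.sum_congr rfl fun i _ => Finset.sum_congr rfl fun j _ => by rw [hs]
  have h3 : ∑ i, ∑ j, W i j * (v i - v j) ^ 2
      = (∑ i, ∑ j, W i j * v i ^ 2) + (∑ i, ∑ j, W i j * v j ^ 2)
        - 2 * ∑ i, ∑ j, W i j * v i * v j := by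
    rw [Finset.mul_sum, ← Finset.sum_add_distrib, ← Finset.sum_sub_distrib]
    refine Finset.sum_congr rfl fun i _ => ?_
    rw [Finset.mul_sum, ← Finset.sum_add_distrib, ← Finset.sum_sub_distrib]
    refine Finset.sum_congr rfl fun j _ => ?_
    ring
  have hnonneg : 0 ≤ ∑ i, ∑ j, W i j * (v i - v j) ^ 2 :=
    Finset.sum_nonneg fun i _ => Finset.sum_nonneg fun j _ =>
      mul_nonneg (hnn i j) (sq_nonneg _)
  linarith

/-- For a connected undirected graph and convex locally Lipschitz `f^i`,
every element `ξ` of the set-valued Lie derivative of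
`V(x,z) = ½‖x−x*‖² + ½‖z−z*‖²` along the saddle-point dynamics
`ẋ ∈ −∂f̃(x) − 𝐋x − 𝐋z, ż = 𝐋x` satisfies `ξ ≤ F(x*,z) − F(x,z*) ≤ 0`, where
`(x*,z*)` is any saddle point of `F`; in particular `V` is nonincreasing along
solutions. -/
theorem lyapunov_nonincreasing_undirected
    {n d : ℕ}
    (A : Matrix (Fin n) (Fin n) ℝ)
    (hA : ∀ i j, 0 ≤ A i j)
    (hsym : Aᵀ = A)
    (hconn : ∀ i j : Fin n, i ≠ j → Relation.TransGen (fun a b => 0 < A a b) i j)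
    (L : Matrix (Fin n) (Fin n) ℝ)
    (hL : L = Matrix.diagonal (fun i => ∑ j, A i j) - A)
    (BL : Matrix (Fin n × Fin d) (Fin n × Fin d) ℝ)
    (hBL : BL = Matrix.kroneckerMap (· * ·) L (1 : Matrix (Fin d) (Fin d) ℝ))
    (f : Fin n → (Fin d → ℝ) → ℝ)
    (hconv : ∀ i, ConvexOn ℝ Set.univ (f i))
    (hlip : ∀ i, LocallyLipschitz (f i))
    (ftil : (Fin n × Fin d → ℝ) → ℝ)
    (hftil : ftil = fun X => ∑ i, f i (fun j => X (i, j)))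
    (F : (Fin n × Fin d → ℝ) → (Fin n × Fin d → ℝ) → ℝ)
    (hF : F = fun X Z => ftil X + X ⬝ᵥ (BL *ᵥ Z) + (1 / 2) * (X ⬝ᵥ (BL *ᵥ X)))
    (Xs Zs : Fin n × Fin d → ℝ)
    (hsaddle : ∀ X Z, F Xs Z ≤ F Xs Zs ∧ F Xs Zs ≤ F X Zs) :
    (∀ (X Z g : Fin n × Fin d → ℝ), g ∈ subdiff ftil X →
      ((X - Xs) ⬝ᵥ (-(BL *ᵥ X) - BL *ᵥ Z - g) + (Z - Zs) ⬝ᵥ (BL *ᵥ X)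
          ≤ F Xs Z - F X Zs ∧ F Xs Z - F X Zs ≤ 0)) ∧
    (∀ (x z g : ℝ → (Fin n × Fin d → ℝ)),
      (∀ t, g t ∈ subdiff ftil (x t)) →
      (∀ t, HasDerivAt x (-(BL *ᵥ x t) - BL *ᵥ z t - g t) t) →
      (∀ t, HasDerivAt z (BL *ᵥ x t) t) →
      ∀ s t : ℝ, s ≤ t →
        (1 / 2) * ((x t - Xs) ⬝ᵥ (x t - Xs)) + (1 / 2) * ((z t - Zs) ⬝ᵥ (z t - Zs)) ≤
        (1 / 2) * ((x s - Xs) ⬝ᵥ (x s - Xs)) + (1 / 2) * ((z s - Zs) ⬝ᵥ (z s - Zs))) := by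
  -- basic symmetry facts
  have hAsym : ∀ i j, A i j = A j i := fun i j => (congrFun (congrFun hsym i) j).symm
  have hLsym : ∀ i j, L i j = L j i := by
    intro i j
    rw [hL]
    simp only [Matrix.sub_apply, Matrix.diagonal_apply]
    by_cases h : i = j
    · subst h; rw [hAsym i i]
    · rw [if_neg h, if_neg (Ne.symm h), hAsym]
  set W : Matrix (Fin n × Fin d) (Fin n × Fin d) ℝ :=
    Matrix.kroneckerMap (· * ·) A (1 : Matrix (Fin d) (Fin d) ℝ) with hW
  have hWnn : ∀ p q, 0 ≤ W p q := by
    intro p q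
    simp only [hW, Matrix.kroneckerMap_apply, Matrix.one_apply]
    split <;> simp [hA]
  have hWsym : ∀ p q, W p q = W q p := by
    intro p q
    simp only [hW, Matrix.kroneckerMap_apply, Matrix.one_apply, hAsym p.1 q.1]
    congr 1
    by_cases h : p.2 = q.2
    · rw [if_pos h, if_pos h.symm]
    · rw [if_neg h, if_neg (Ne.symm h)]
  have hBLform : BL = Matrix.diagonal (fun p => ∑ q, W p q) - W := by
    ext ⟨i, j⟩ ⟨i', j'⟩
    simp only [hBL, hL, hW, Matrix.kroneckerMap_apply, Matrix.sub_apply, Matrix.diagonal_apply,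
      Matrix.one_apply, Prod.mk.injEq, Fintype.sum_prod_type, mul_ite, mul_one, mul_zero,
      Finset.sum_ite_eq, Finset.mem_univ, if_true, ite_mul, zero_mul, sub_mul]
    by_cases h1 : i = i' <;> by_cases h2 : j = j' <;> simp [h1, h2]
  have hpsd : ∀ v, 0 ≤ v ⬝ᵥ (BL *ᵥ v) := by
    intro v
    rw [hBLform]
    exact lap_psd W hWnn hWsym v
  have hBLsym : BLᵀ = BL := by
    ext ⟨i, j⟩ ⟨i', j'⟩
    simp only [Matrix.transpose_apply, hBL, Matrix.kroneckerMap_apply, Matrix.one_apply,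
      hLsym i' i]
    congr 1
    by_cases h : j = j'
    · rw [if_pos h, if_pos h.symm]
    · rw [if_neg (Ne.symm h), if_neg h]
  have hdot : ∀ u w : Fin n × Fin d → ℝ, u ⬝ᵥ (BL *ᵥ w) = w ⬝ᵥ (BL *ᵥ u) := by
    intro u w
    rw [Matrix.dotProduct_mulVec, ← Matrix.mulVec_transpose, hBLsym, dotProduct_comm]
  -- part 1
  have hpart1 : ∀ (X Z g : Fin n × Fin d → ℝ), g ∈ subdiff ftil X →
      ((X - Xs) ⬝ᵥ (-(BL *ᵥ X) - BL *ᵥ Z - g) + (Z - Zs) ⬝ᵥ (BL *ᵥ X)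
          ≤ F Xs Z - F X Zs ∧ F Xs Z - F X Zs ≤ 0) := by
    intro X Z g hg
    have hsub := hg Xs
    have h0 := hpsd (X - Xs)
    have hsaddle2 := hsaddle X Z
    constructor
    · rw [hF]
      simp only [Matrix.mulVec_sub, dotProduct_sub, sub_dotProduct,
        dotProduct_neg, neg_dotProduct] at h0 ⊢
      simp only [dotProduct_sub] at hsub
      have e1 := hdot X Z
      have e2 := hdot Xs X
      have e3 := hdot Zs X
      have c1 := dotProduct_comm g X
      have c2 := dotProduct_comm g Xs
      linarith
    · linarith [hsaddle2.1, hsaddle2.2]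
  refine ⟨hpart1, ?_⟩
  -- part 2
  intro x z g hg hx hz s t hst
  set V : ℝ → ℝ := fun τ =>
    (1 / 2) * ((x τ - Xs) ⬝ᵥ (x τ - Xs)) + (1 / 2) * ((z τ - Zs) ⬝ᵥ (z τ - Zs)) with hVdef
  have hVd : ∀ τ, HasDerivAt V
      ((x τ - Xs) ⬝ᵥ (-(BL *ᵥ x τ) - BL *ᵥ z τ - g τ) + (z τ - Zs) ⬝ᵥ (BL *ᵥ x τ)) τ := by
    intro τ
    have hx1 : ∀ i, HasDerivAt (fun τ => x τ i - Xs i)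
        ((-(BL *ᵥ x τ) - BL *ᵥ z τ - g τ) i) τ :=
      fun i => ((hasDerivAt_pi.1 (hx τ)) i).sub_const _
    have hz1 : ∀ i, HasDerivAt (fun τ => z τ i - Zs i) ((BL *ᵥ x τ) i) τ :=
      fun i => ((hasDerivAt_pi.1 (hz τ)) i).sub_const _
    have hq : HasDerivAt (fun τ => ∑ i, (x τ i - Xs i) * (x τ i - Xs i))
        (∑ i, ((-(BL *ᵥ x τ) - BL *ᵥ z τ - g τ) i * (x τ i - Xs i)
          + (x τ i - Xs i) * (-(BL *ᵥ x τ) - BL *ᵥ z τ - g τ) i)) τ :=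
      HasDerivAt.fun_sum fun i _ => (hx1 i).mul (hx1 i)
    have hqz : HasDerivAt (fun τ => ∑ i, (z τ i - Zs i) * (z τ i - Zs i))
        (∑ i, ((BL *ᵥ x τ) i * (z τ i - Zs i) + (z τ i - Zs i) * (BL *ᵥ x τ) i)) τ :=
      HasDerivAt.fun_sum fun i _ => (hz1 i).mul (hz1 i)
    have hcomb := (hq.const_mul ((1:ℝ) / 2)).add (hqz.const_mul ((1:ℝ) / 2))
    have hfun : V = fun τ => (1 / 2) * (∑ i, (x τ i - Xs i) * (x τ i - Xs i))
        + (1 / 2) * (∑ i, (z τ i - Zs i) * (z τ i - Zs i)) := by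
      funext τ
      simp only [hVdef, dotProduct, Pi.sub_apply]
    rw [hfun]
    refine hcomb.congr_deriv ?_
    simp only [dotProduct, Pi.sub_apply, Finset.mul_sum]
    rw [← Finset.sum_add_distrib, ← Finset.sum_add_distrib]
    refine Finset.sum_congr rfl fun i _ => ?_
    ring
  have hdiff : Differentiable ℝ V := fun τ => (hVd τ).differentiableAt
  have hanti : Antitone V := by
    refine antitone_of_deriv_nonpos hdiff fun τ => ?_
    rw [(hVd τ).deriv]
    have h := hpart1 (x τ) (z τ) (g τ) (hg τ)
    linarith [h.1, h.2]
  exact hanti hst
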